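/- Let C be a simplicial complex whose vertex set Y lies in the free commutative semigroup T(X) for a finite nonempty set X, such that κ_X faithfully realizes C, and let α ∈ C be nonempty. Then the family {γ ∈ C : α ⊄ γ} ∪ {γ ∪ {α⁺} : γ ∈ C, α ⊄ γ, α ∪ γ ∈ C}, where α⁺ is the sum of the elements of α in T(X), is a simplicial complex isomorphic to the Feichtner–Kozlov combinatorial blowup Bl_α C of the meet-semilattice C at α. -/

import Mathlib

/-- A (finite abstract) simplicial complex. -/
def IsSimplicialComplex {V : Type*} (C : Set (Finset V)) : Prop :=
  ∅ ∈ C ∧ ∀ α ∈ C, ∀ β ⊆ α, β ∈ C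

/-- Faithful realization of a simplicial complex. -/
def FaithfullyRealizes {V E : Type*} [AddCommMonoid E] [Module ℝ E]
    (f : V → E) (C : Set (Finset V)) : Prop :=
  ∀ α ∈ C, ∀ β ∈ C, ∀ k l : V → ℝ,
    (∀ a ∈ α, 0 < k a) → (∀ b ∈ β, 0 < l b) →
    ∑ a ∈ α, k a • f a = ∑ b ∈ β, l b • f b →
    α = β ∧ ∀ a ∈ α, k a = l a

/-- The underlying set of the Feichtner–Kozlov combinatorial blowup of a
meet-semilattice L at α. -/
def BlowCarrier {L : Type*} [Preorder L] (α : L) : Type _ :=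
  {γ : L // ¬ α ≤ γ} ⊕ {γ : L // ¬ α ≤ γ ∧ ∃ j, IsLUB {γ, α} j}

/-- The order of the combinatorial blowup. -/
def blowLE {L : Type*} [Preorder L] (α : L) :
    BlowCarrier α → BlowCarrier α → Prop
  | Sum.inl β, Sum.inl γ => β.1 ≤ γ.1
  | Sum.inl β, Sum.inr γ => β.1 ≤ γ.1
  | Sum.inr _, Sum.inl _ => False
  | Sum.inr β, Sum.inr γ => β.1 ≤ γ.1

/-- For a simplicial complex C with vertices in T(X) ≅ ℕ^X − {0} faithfully
realized by κ_X, and a nonempty face α ∈ C, the family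
{γ ∈ C : α ⊄ γ} ∪ {γ ∪ {α⁺} : γ ∈ C, α ⊄ γ, α ∪ γ ∈ C}, where α⁺ = Σ_{a∈α} a,
is a simplicial complex order-isomorphic to the combinatorial blowup Bl_α C
of the meet-semilattice C at α. -/
theorem stmt17 {X : Type*} [Fintype X] [Nonempty X] [DecidableEq X]
    (C : Set (Finset (X → ℕ))) (hC : IsSimplicialComplex C)
    (hnz : ∀ γ ∈ C, ∀ v ∈ γ, v ≠ 0)
    (hfaith : FaithfullyRealizes (fun (v : X → ℕ) (x : X) => (v x : ℝ)) C)
    (α : Finset (X → ℕ)) (hα : α ∈ C) (hne : α.Nonempty) :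
    IsSimplicialComplex
      ({γ ∈ C | ¬ α ⊆ γ} ∪
        {β : Finset (X → ℕ) | ∃ γ ∈ C, ¬ α ⊆ γ ∧ α ∪ γ ∈ C ∧
          β = insert (∑ a ∈ α, a) γ}) ∧
    ∃ e : {β : Finset (X → ℕ) //
        β ∈ ({γ ∈ C | ¬ α ⊆ γ} ∪
          {β : Finset (X → ℕ) | ∃ γ ∈ C, ¬ α ⊆ γ ∧ α ∪ γ ∈ C ∧
            β = insert (∑ a ∈ α, a) γ})} ≃
        BlowCarrier (⟨α, hα⟩ : {γ : Finset (X → ℕ) // γ ∈ C}),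
      ∀ a b, a.1 ⊆ b.1 ↔ blowLE _ (e a) (e b) := by
  classical
  set s : X → ℕ := ∑ a ∈ α, a with hs
  set F : Set (Finset (X → ℕ)) :=
    ({γ ∈ C | ¬ α ⊆ γ} ∪
      {β : Finset (X → ℕ) | ∃ γ ∈ C, ¬ α ⊆ γ ∧ α ∪ γ ∈ C ∧
        β = insert s γ}) with hF
  -- key faithfulness consequence
  have key : ∀ γ ∈ C, s ∈ γ → α ⊆ γ := by
    intro γ hγ hsγ
    have h1 : ({s} : Finset (X → ℕ)) ∈ C :=
      hC.2 γ hγ {s} (Finset.singleton_subset_iff.mpr hsγ)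
    have heq : ∑ a ∈ α, (1 : ℝ) • (fun x : X => ((a x : ℝ))) =
        ∑ b ∈ ({s} : Finset (X → ℕ)), (1 : ℝ) • (fun x : X => ((b x : ℝ))) := by
      funext x
      simp only [Finset.sum_singleton, one_smul, Finset.sum_apply, hs, Finset.sum_apply]
      push_cast
      rfl
    have := hfaith α hα {s} h1 (fun _ => 1) (fun _ => 1)
      (fun _ _ => one_pos) (fun _ _ => one_pos) heq
    rw [this.1]
    exact Finset.singleton_subset_iff.mpr hsγ
  have hmemF1 : ∀ γ, γ ∈ C → ¬ α ⊆ γ → γ ∈ F := by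
    intro γ h1 h2; rw [hF]; exact Or.inl ⟨h1, h2⟩
  have hmemF2 : ∀ γ, γ ∈ C → ¬ α ⊆ γ → α ∪ γ ∈ C → insert s γ ∈ F := by
    intro γ h1 h2 h3; rw [hF]; exact Or.inr ⟨γ, h1, h2, h3, rfl⟩
  have hmem1 : ∀ β ∈ F, s ∉ β → β ∈ C ∧ ¬ α ⊆ β := by
    intro β hβ hsβ
    rw [hF] at hβ
    rcases hβ with h | h
    · exact ⟨h.1, h.2⟩
    · obtain ⟨γ, hγ, hn, hu, rfl⟩ := h
      exact absurd (Finset.mem_insert_self s γ) hsβ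
  have hmem2 : ∀ β ∈ F, s ∈ β →
      β.erase s ∈ C ∧ ¬ α ⊆ β.erase s ∧ α ∪ β.erase s ∈ C := by
    intro β hβ hsβ
    rw [hF] at hβ
    rcases hβ with h | h
    · exact absurd (key β h.1 hsβ) h.2
    · obtain ⟨γ, hγ, hn, hu, rfl⟩ := h
      have hsγ : s ∉ γ := fun h' => hn (key γ hγ h')
      rw [Finset.erase_insert hsγ]
      exact ⟨hγ, hn, hu⟩
  constructor
  · constructor
    · exact hmemF1 ∅ hC.1 (fun h => hne.ne_empty (Finset.subset_empty.mp h))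
    · intro β hβ δ hδ
      by_cases hsδ : s ∈ δ
      · have hsβ : s ∈ β := hδ hsδ
        obtain ⟨h1, h2, h3⟩ := hmem2 β hβ hsβ
        have hδe : δ.erase s ⊆ β.erase s := Finset.erase_subset_erase _ hδ
        have hδC : δ.erase s ∈ C := hC.2 _ h1 _ hδe
        have hn : ¬ α ⊆ δ.erase s := fun h => h2 (h.trans hδe)
        have hu : α ∪ δ.erase s ∈ C :=
          hC.2 _ h3 _ (Finset.union_subset_union_right hδe)
        have hins : δ = insert s (δ.erase s) := (Finset.insert_erase hsδ).symm
        rw [hins]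
        exact hmemF2 _ hδC hn hu
      · by_cases hsβ : s ∈ β
        · obtain ⟨h1, h2, h3⟩ := hmem2 β hβ hsβ
          have hδ' : δ ⊆ β.erase s := Finset.subset_erase.mpr ⟨hδ, hsδ⟩
          exact hmemF1 _ (hC.2 _ h1 _ hδ') (fun h => h2 (h.trans hδ'))
        · obtain ⟨h1, h2⟩ := hmem1 β hβ hsβ
          exact hmemF1 _ (hC.2 _ h1 _ hδ) (fun h => h2 (h.trans hδ))
  · -- the order isomorphism
    set L := {γ : Finset (X → ℕ) // γ ∈ C} with hL
    set α' : L := ⟨α, hα⟩ with hα'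
    have hlub : ∀ (γ : Finset (X → ℕ)) (hγ : γ ∈ C) (hu : α ∪ γ ∈ C),
        IsLUB ({⟨γ, hγ⟩, α'} : Set L) ⟨α ∪ γ, hu⟩ := by
      intro γ hγ hu
      constructor
      · intro x hx
        simp only [Set.mem_insert_iff, Set.mem_singleton_iff] at hx
        rcases hx with rfl | rfl
        · exact Finset.subset_union_right
        · exact Finset.subset_union_left
      · intro u hu'
        have h1 : (⟨γ, hγ⟩ : L) ≤ u := hu' (Set.mem_insert _ _)
        have h2 : α' ≤ u := hu' (Set.mem_insert_of_mem _ rfl)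
        exact Finset.union_subset h2 h1
    have hjoin : ∀ (γ : L), (∃ j, IsLUB ({γ, α'} : Set L) j) → α ∪ γ.1 ∈ C := by
      rintro γ ⟨j, hj⟩
      have h1 : γ ≤ j := hj.1 (Set.mem_insert _ _)
      have h2 : α' ≤ j := hj.1 (Set.mem_insert_of_mem _ rfl)
      exact hC.2 j.1 j.2 _ (Finset.union_subset h2 h1)
    refine ⟨⟨fun β =>
        if h : s ∈ β.1 then
          Sum.inr ⟨⟨β.1.erase s, (hmem2 β.1 β.2 h).1⟩, (hmem2 β.1 β.2 h).2.1,
            ⟨⟨α ∪ β.1.erase s, (hmem2 β.1 β.2 h).2.2⟩,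
              hlub _ (hmem2 β.1 β.2 h).1 (hmem2 β.1 β.2 h).2.2⟩⟩
        else
          Sum.inl ⟨⟨β.1, (hmem1 β.1 β.2 h).1⟩, (hmem1 β.1 β.2 h).2⟩,
      fun b => match b with
        | Sum.inl γ => ⟨γ.1.1, hmemF1 _ γ.1.2 γ.2⟩
        | Sum.inr γ => ⟨insert s γ.1.1, hmemF2 _ γ.1.2 γ.2.1 (hjoin γ.1 γ.2.2)⟩,
      ?_, ?_⟩, ?_⟩
    · intro β
      by_cases h : s ∈ β.1
      · simp only [h, ↓reduceDIte]
        exact Subtype.ext (Finset.insert_erase h)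
      · simp only [h, ↓reduceDIte]
    · intro b
      match b with
      | Sum.inl γ =>
        have h : s ∉ γ.1.1 := fun h' => γ.2 (key γ.1.1 γ.1.2 h')
        simp only [h, ↓reduceDIte, Subtype.coe_eta]
        rfl
      | Sum.inr γ =>
        have h : s ∉ γ.1.1 := fun h' => γ.2.1 (key γ.1.1 γ.1.2 h')
        have h2 : s ∈ insert s γ.1.1 := Finset.mem_insert_self _ _
        simp only [h2, ↓reduceDIte]
        congr 1
        exact Subtype.ext (Subtype.ext (Finset.erase_insert h))
    · intro a b
      by_cases ha : s ∈ a.1 <;> by_cases hb : s ∈ b.1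
      · simp only [Equiv.coe_fn_mk, ha, hb, ↓reduceDIte]
        show a.1 ⊆ b.1 ↔ a.1.erase s ⊆ b.1.erase s
        constructor
        · exact Finset.erase_subset_erase _
        · intro h
          have := Finset.insert_subset_insert s h
          rwa [Finset.insert_erase ha, Finset.insert_erase hb] at this
      · simp only [Equiv.coe_fn_mk, ha, hb, ↓reduceDIte]
        show a.1 ⊆ b.1 ↔ blowLE α' (Sum.inr _) (Sum.inl _)
        simp only [blowLE, iff_false]
        exact fun h => hb (h ha)
      · simp only [Equiv.coe_fn_mk, ha, hb, ↓reduceDIte]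
        show a.1 ⊆ b.1 ↔ a.1 ⊆ b.1.erase s
        constructor
        · exact fun h => Finset.subset_erase.mpr ⟨h, ha⟩
        · exact fun h => h.trans (Finset.erase_subset _ _)
      · simp only [Equiv.coe_fn_mk, ha, hb, ↓reduceDIte]
        show a.1 ⊆ b.1 ↔ a.1 ⊆ b.1
        rfl
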